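/- Let α > 0 and let E = {x_1, …, x_N} be a sorted 2d Pareto front. Define M_{k,i} as the minimum of Σ_{P ∈ π} f_α(P) over all partitions π of {x_1, …, x_i} into k nonempty subsets. Then the Bellman equations hold: (i) M_{1,i} = f_α(C_{1,i}) for all i ∈ [1, N]; and (ii) for all k ∈ [2, K] and all i with k ≤ i ≤ N, M_{k,i} = min over j ∈ [k−1, i−1] of (M_{k−1,j} + f_α(C_{j+1,i})). -/

import Mathlib

set_option maxHeartbeats 1000000

open scoped Classical

/-- Points of the plane with the Euclidean structure. -/
abbrev E2 := EuclideanSpace ℝ (Fin 2)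

/-- The `α`-medoid cost `f_α(P) = min_{y ∈ P} Σ_{x ∈ P} ‖x − y‖^α` of a finite set `P`. -/
noncomputable def fCost (α : ℝ) (P : Finset E2) : ℝ :=
  sInf ((fun y => ∑ z ∈ P, dist z y ^ α) '' ↑P)

/-- The interval cluster `C_{i,i'} = {x j : i ≤ j ≤ i'}`. -/
noncomputable def C (x : ℕ → E2) (i i' : ℕ) : Finset E2 := (Finset.Icc i i').image x

/-- `M_{k,i}`: the optimal cost of partitioning the first `i` points `{x_1, …, x_i}` into
`k` nonempty clusters, each cluster paying its `α`-medoid cost. -/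
noncomputable def Mval (α : ℝ) (x : ℕ → E2) (k i : ℕ) : ℝ :=
  sInf {v : ℝ | ∃ P : Fin k → Finset E2,
    (∀ m, (P m).Nonempty) ∧
    (∀ m m', m ≠ m' → Disjoint (P m) (P m')) ∧
    Finset.univ.biUnion P = (Finset.Icc 1 i).image x ∧
    v = ∑ m, fCost α (P m)}

/-! ### fCost basics -/

lemma fCost_nonneg (α : ℝ) (P : Finset E2) : 0 ≤ fCost α P := by
  apply Real.sInf_nonneg
  rintro v ⟨y, -, rfl⟩
  exact Finset.sum_nonneg fun z _ => Real.rpow_nonneg dist_nonneg α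

lemma fCost_le (α : ℝ) {P : Finset E2} {y : E2} (hy : y ∈ P) :
    fCost α P ≤ ∑ z ∈ P, dist z y ^ α :=
  csInf_le ((P.finite_toSet.image _).bddBelow) ⟨y, by simpa using hy, rfl⟩

lemma fCost_exists (α : ℝ) {P : Finset E2} (hP : P.Nonempty) :
    ∃ y ∈ P, fCost α P = ∑ z ∈ P, dist z y ^ α := by
  have h : ((fun y => ∑ z ∈ P, dist z y ^ α) '' ↑P).Nonempty :=
    (Set.Nonempty.image _ (by exact_mod_cast hP))
  have := h.csInf_mem (P.finite_toSet.image _)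
  obtain ⟨y, hy, hv⟩ := this
  exact ⟨y, by exact_mod_cast hy, hv.symm⟩

/-! ### geometry on the Pareto front -/

lemma dist_le_of_coords {u v w : E2} (h0 : |u 0 - v 0| ≤ |u 0 - w 0|)
    (h1 : |u 1 - v 1| ≤ |u 1 - w 1|) : dist u v ≤ dist u w := by
  rw [EuclideanSpace.dist_eq, EuclideanSpace.dist_eq]
  apply Real.sqrt_le_sqrt
  rw [Fin.sum_univ_two, Fin.sum_univ_two]
  simp only [Real.dist_eq]
  have a0 := abs_nonneg (u 0 - v 0); have a1 := abs_nonneg (u 1 - v 1)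
  exact add_le_add (pow_le_pow_left₀ a0 h0 2) (pow_le_pow_left₀ a1 h1 2)

lemma dist_lt_of_coords {u v w : E2} (h0 : |u 0 - v 0| < |u 0 - w 0|)
    (h1 : |u 1 - v 1| < |u 1 - w 1|) : dist u v < dist u w := by
  rw [EuclideanSpace.dist_eq, EuclideanSpace.dist_eq]
  apply Real.sqrt_lt_sqrt
  · positivity
  rw [Fin.sum_univ_two, Fin.sum_univ_two]
  simp only [Real.dist_eq]
  apply add_lt_add
  · exact pow_lt_pow_left₀ h0 (abs_nonneg _) two_ne_zero
  · exact pow_lt_pow_left₀ h1 (abs_nonneg _) two_ne_zero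

section sorted

variable {N : ℕ} {x : ℕ → E2}
  (hsort : ∀ i j, 1 ≤ i → i < j → j ≤ N → x i 0 < x j 0 ∧ x j 1 < x i 1)

include hsort

lemma coord_mono {a b : ℕ} (ha : 1 ≤ a) (hab : a ≤ b) (hbN : b ≤ N) :
    x a 0 ≤ x b 0 ∧ x b 1 ≤ x a 1 := by
  rcases eq_or_lt_of_le hab with rfl | h
  · exact ⟨le_refl _, le_refl _⟩
  · exact ⟨(hsort a b ha h hbN).1.le, (hsort a b ha h hbN).2.le⟩

lemma x_injOn {a b : ℕ} (ha : 1 ≤ a) (hb : 1 ≤ b) (haN : a ≤ N) (hbN : b ≤ N)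
    (h : x a = x b) : a = b := by
  by_contra hne
  rcases Nat.lt_or_ge a b with hlt | hge
  · exact absurd (congrArg (fun v : E2 => v 0) h) (ne_of_lt (hsort a b ha hlt hbN).1)
  · have hlt : b < a := lt_of_le_of_ne hge (Ne.symm hne)
    exact absurd (congrArg (fun v : E2 => v 0) h).symm (ne_of_lt (hsort b a hb hlt haN).1)

/-- a ≤ b ≤ c: dist(x a, x b) ≤ dist(x a, x c) -/
lemma distL1a {a b c : ℕ} (ha : 1 ≤ a) (hab : a ≤ b) (hbc : b ≤ c) (hcN : c ≤ N) :
    dist (x a) (x b) ≤ dist (x a) (x c) := by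
  have h1 := coord_mono hsort ha hab (le_trans hbc hcN)
  have h2 := coord_mono hsort (le_trans ha hab) hbc hcN
  apply dist_le_of_coords
  · rw [abs_sub_comm, abs_of_nonneg (by linarith), abs_sub_comm, abs_of_nonneg (by linarith)]
    linarith
  · rw [abs_of_nonneg (by linarith), abs_of_nonneg (by linarith)]; linarith

/-- a ≤ b ≤ c: dist(x b, x c) ≤ dist(x a, x c) -/
lemma distL1b {a b c : ℕ} (ha : 1 ≤ a) (hab : a ≤ b) (hbc : b ≤ c) (hcN : c ≤ N) :
    dist (x b) (x c) ≤ dist (x a) (x c) := by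
  have h1 := coord_mono hsort ha hab (le_trans hbc hcN)
  have h2 := coord_mono hsort (le_trans ha hab) hbc hcN
  rw [dist_comm (x b), dist_comm (x a)]
  apply dist_le_of_coords
  · rw [abs_of_nonneg (by linarith [h1.1, h2.1]), abs_of_nonneg (by linarith [h1.1, h2.1])]
    linarith [h1.1, h2.1]
  · rw [abs_sub_comm, abs_of_nonneg (by linarith [h1.2, h2.2]), abs_sub_comm,
      abs_of_nonneg (by linarith [h1.2, h2.2])]
    linarith [h1.2, h2.2]

/-- a < b < c: dist(x a, x b) < dist(x a, x c) -/
lemma distL2 {a b c : ℕ} (ha : 1 ≤ a) (hab : a < b) (hbc : b < c) (hcN : c ≤ N) :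
    dist (x a) (x b) < dist (x a) (x c) := by
  have h1 := hsort a b ha hab (by omega)
  have h2 := hsort b c (by omega) hbc hcN
  apply dist_lt_of_coords
  · rw [abs_sub_comm, abs_of_nonneg (by linarith), abs_sub_comm, abs_of_nonneg (by linarith)]
    linarith
  · rw [abs_of_nonneg (by linarith), abs_of_nonneg (by linarith)]; linarith

end sorted

/-! ### Voronoi assignment to medoids -/

noncomputable def medoidAssign {n : ℕ} (w : Fin (n + 1) → E2) (z : E2) : Fin (n + 1) :=
  (Finset.univ.filter fun m => ∀ m', dist z (w m) ≤ dist z (w m')).max'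
    (by
      obtain ⟨m, -, hm⟩ := Finset.exists_min_image Finset.univ (fun m => dist z (w m))
        ⟨0, Finset.mem_univ 0⟩
      exact ⟨m, Finset.mem_filter.2 ⟨Finset.mem_univ m, fun m' => hm m' (Finset.mem_univ m')⟩⟩)

lemma medoidAssign_le {n : ℕ} (w : Fin (n + 1) → E2) (z : E2) (m' : Fin (n + 1)) :
    dist z (w (medoidAssign w z)) ≤ dist z (w m') := by
  have := Finset.max'_mem (Finset.univ.filter fun m => ∀ m', dist z (w m) ≤ dist z (w m'))
    (by
      obtain ⟨m, -, hm⟩ := Finset.exists_min_image Finset.univ (fun m => dist z (w m))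
        ⟨0, Finset.mem_univ 0⟩
      exact ⟨m, Finset.mem_filter.2 ⟨Finset.mem_univ m, fun m' => hm m' (Finset.mem_univ m')⟩⟩)
  exact (Finset.mem_filter.1 this).2 m'

lemma le_medoidAssign {n : ℕ} {w : Fin (n + 1) → E2} {z : E2} {m : Fin (n + 1)}
    (h : ∀ m', dist z (w m) ≤ dist z (w m')) : m ≤ medoidAssign w z :=
  Finset.le_max' _ m (Finset.mem_filter.2 ⟨Finset.mem_univ m, h⟩)

section assign

variable {N : ℕ} {x : ℕ → E2}
  (hsort : ∀ i j, 1 ≤ i → i < j → j ≤ N → x i 0 < x j 0 ∧ x j 1 < x i 1)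

include hsort

lemma assign_fixed {n i : ℕ} (hiN : i ≤ N) {d : Fin (n + 1) → ℕ} (hd : StrictMono d)
    (hdmem : ∀ m, d m ∈ Finset.Icc 1 i) (m : Fin (n + 1)) :
    medoidAssign (fun m' => x (d m')) (x (d m)) = m := by
  set w := fun m' => x (d m') with hw
  have h0 : dist (x (d m)) (w (medoidAssign w (x (d m)))) ≤ 0 := by
    have := medoidAssign_le w (x (d m)) m
    simpa [hw] using this
  have heq : x (d m) = x (d (medoidAssign w (x (d m)))) := by
    have := dist_le_zero.1 h0
    simpa [hw] using this
  have hm1 := Finset.mem_Icc.1 (hdmem m)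
  have hm2 := Finset.mem_Icc.1 (hdmem (medoidAssign w (x (d m))))
  exact (hd.injective (x_injOn hsort hm1.1 hm2.1 (le_trans hm1.2 hiN) (le_trans hm2.2 hiN)
    heq)).symm

lemma assign_mono {n i : ℕ} (hiN : i ≤ N) {d : Fin (n + 1) → ℕ} (hd : StrictMono d)
    (hdmem : ∀ m, d m ∈ Finset.Icc 1 i) {t t' : ℕ} (ht : t ∈ Finset.Icc 1 i)
    (ht' : t' ∈ Finset.Icc 1 i) (htt : t ≤ t') :
    medoidAssign (fun m' => x (d m')) (x t) ≤ medoidAssign (fun m' => x (d m')) (x t') := by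
  rcases eq_or_lt_of_le htt with rfl | hlt
  · exact le_refl _
  set w := fun m' => x (d m') with hw
  have ht1 := Finset.mem_Icc.1 ht
  have ht'1 := Finset.mem_Icc.1 ht'
  have htN : t ≤ N := le_trans ht1.2 hiN
  have ht'N : t' ≤ N := le_trans ht'1.2 hiN
  set m := medoidAssign w (x t) with hm
  by_contra hcon
  push_neg at hcon
  have key : ∀ m'', m'' < m → dist (x t') (w m) ≤ dist (x t') (w m'') := by
    intro m'' hm''
    have hAB : d m'' < d m := hd hm''
    have hA := Finset.mem_Icc.1 (hdmem m'')
    have hB := Finset.mem_Icc.1 (hdmem m)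
    have hAN : d m'' ≤ N := le_trans hA.2 hiN
    have hBN : d m ≤ N := le_trans hB.2 hiN
    have hyp : dist (x t) (w m) ≤ dist (x t) (w m'') := medoidAssign_le w (x t) m''
    rcases le_or_gt (d m) t' with hc1 | hc1
    · rw [hw]
      rw [dist_comm (x t') (x (d m)), dist_comm (x t') (x (d m''))]
      exact distL1b hsort hA.1 hAB.le hc1 ht'N
    · rcases le_or_gt t (d m'') with hc2 | hc2
      · exfalso
        rcases eq_or_lt_of_le hc2 with heq | hlt2
        · have hz : dist (x t) (w m'') = 0 := by simp [hw, ← heq]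
          have h0 : dist (x t) (w m) ≤ 0 := by linarith [hyp, hz.le]
          have heq2 : x t = x (d m) := dist_le_zero.1 h0
          have := x_injOn hsort ht1.1 hB.1 htN hBN heq2
          omega
        · have := distL2 hsort ht1.1 hlt2 hAB hBN
          rw [hw] at hyp
          linarith
      · have h1 : dist (x t') (x (d m)) ≤ dist (x t) (x (d m)) :=
          distL1b hsort ht1.1 hlt.le hc1.le hBN
        have h2 : dist (x t) (x (d m'')) ≤ dist (x t') (x (d m'')) := by
          rw [dist_comm (x t) (x (d m'')), dist_comm (x t') (x (d m''))]
          exact distL1a hsort hA.1 hc2.le hlt.le ht'N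
        rw [hw] at hyp ⊢
        linarith
  have hall : ∀ m'', dist (x t') (w m) ≤ dist (x t') (w m'') := fun m'' =>
    le_trans (key _ hcon) (medoidAssign_le w (x t') m'')
  exact absurd (le_medoidAssign hall) (not_le.2 hcon)

end assign

/-! ### the Mval feasible set -/

def MSet (α : ℝ) (x : ℕ → E2) (k i : ℕ) : Set ℝ :=
  {v : ℝ | ∃ P : Fin k → Finset E2,
    (∀ m, (P m).Nonempty) ∧
    (∀ m m', m ≠ m' → Disjoint (P m) (P m')) ∧
    Finset.univ.biUnion P = (Finset.Icc 1 i).image x ∧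
    v = ∑ m, fCost α (P m)}

lemma Mval_eq (α : ℝ) (x : ℕ → E2) (k i : ℕ) : Mval α x k i = sInf (MSet α x k i) := rfl

lemma MSet_bddBelow (α : ℝ) (x : ℕ → E2) (k i : ℕ) : BddBelow (MSet α x k i) := by
  refine ⟨0, ?_⟩
  rintro v ⟨P, -, -, -, rfl⟩
  exact Finset.sum_nonneg fun m _ => fCost_nonneg α (P m)

lemma MSet_finite (α : ℝ) (x : ℕ → E2) (k i : ℕ) : (MSet α x k i).Finite := by
  classical
  set T := (Finset.Icc 1 i).image x with hT
  have h1 : (Set.pi Set.univ (fun _ : Fin k => (↑T.powerset : Set (Finset E2)))).Finite :=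
    Set.Finite.pi (fun _ => T.powerset.finite_toSet)
  apply Set.Finite.subset (h1.image (fun P => ∑ m, fCost α (P m)))
  rintro v ⟨P, -, -, hun, rfl⟩
  refine ⟨P, ?_, rfl⟩
  intro m _
  have hsub : P m ⊆ T := by
    rw [hT, ← hun]
    exact Finset.subset_biUnion_of_mem P (Finset.mem_univ m)
  simpa using hsub

section msets

variable {N : ℕ} {x : ℕ → E2}
  (hsort : ∀ i j, 1 ≤ i → i < j → j ≤ N → x i 0 < x j 0 ∧ x j 1 < x i 1)

include hsort

lemma image_disjoint {s t : Finset ℕ} (hs : s ⊆ Finset.Icc 1 N) (ht : t ⊆ Finset.Icc 1 N)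
    (hst : Disjoint s t) : Disjoint (s.image x) (t.image x) := by
  rw [Finset.disjoint_left]
  rintro z hz1 hz2
  obtain ⟨a, ha, rfl⟩ := Finset.mem_image.1 hz1
  obtain ⟨b, hb, hba⟩ := Finset.mem_image.1 hz2
  have ha' := Finset.mem_Icc.1 (hs ha)
  have hb' := Finset.mem_Icc.1 (ht hb)
  have := x_injOn hsort hb'.1 ha'.1 hb'.2 ha'.2 hba
  subst this
  exact Finset.disjoint_left.1 hst ha hb

lemma mem_MSet_of_index (α : ℝ) {k i : ℕ} (hiN : i ≤ N) (I : Fin k → Finset ℕ)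
    (hne : ∀ m, (I m).Nonempty) (hdisj : ∀ m m', m ≠ m' → Disjoint (I m) (I m'))
    (hun : Finset.univ.biUnion I = Finset.Icc 1 i) :
    (∑ m, fCost α ((I m).image x)) ∈ MSet α x k i := by
  have hsub : ∀ m, I m ⊆ Finset.Icc 1 N := by
    intro m
    refine subset_trans ?_ (Finset.Icc_subset_Icc_right hiN)
    rw [← hun]
    exact Finset.subset_biUnion_of_mem I (Finset.mem_univ m)
  refine ⟨fun m => (I m).image x, fun m => (hne m).image x, ?_, ?_, rfl⟩
  · intro m m' hmm
    exact image_disjoint hsort (hsub m) (hsub m') (hdisj m m' hmm)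
  · rw [← hun]
    ext z
    simp only [Finset.mem_biUnion, Finset.mem_univ, true_and, Finset.mem_image]
    tauto

lemma mval_le_index (α : ℝ) {k i : ℕ} (hiN : i ≤ N) (I : Fin k → Finset ℕ)
    (hne : ∀ m, (I m).Nonempty) (hdisj : ∀ m m', m ≠ m' → Disjoint (I m) (I m'))
    (hun : Finset.univ.biUnion I = Finset.Icc 1 i) :
    Mval α x k i ≤ ∑ m, fCost α ((I m).image x) :=
  csInf_le (MSet_bddBelow α x k i) (mem_MSet_of_index hsort α hiN I hne hdisj hun)

lemma MSet_nonempty (α : ℝ) {k i : ℕ} (hk : 1 ≤ k) (hki : k ≤ i) (hiN : i ≤ N) :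
    (MSet α x k i).Nonempty := by
  refine ⟨_, mem_MSet_of_index hsort α hiN
    (fun m => if m.val = k - 1 then Finset.Icc k i else {m.val + 1}) ?_ ?_ ?_⟩
  · intro m
    split
    · exact Finset.nonempty_Icc.2 hki
    · exact Finset.singleton_nonempty _
  · intro m m' hmm
    have hv : m.val ≠ m'.val := fun h => hmm (Fin.ext h)
    have h1 := m.isLt; have h2 := m'.isLt
    rw [Finset.disjoint_left]
    intro a ha ha'
    split at ha <;> split at ha' <;>
      simp only [Finset.mem_Icc, Finset.mem_singleton] at ha ha' <;> omega
  · ext t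
    simp only [Finset.mem_biUnion, Finset.mem_univ, true_and, Finset.mem_Icc]
    constructor
    · rintro ⟨m, hm⟩
      have h1 := m.isLt
      split at hm <;> simp only [Finset.mem_Icc, Finset.mem_singleton] at hm <;> omega
    · intro ht
      by_cases h : k ≤ t
      · refine ⟨⟨k - 1, by omega⟩, ?_⟩
        dsimp only
        rw [if_pos rfl]
        exact Finset.mem_Icc.2 ⟨h, ht.2⟩
      · refine ⟨⟨t - 1, by omega⟩, ?_⟩
        dsimp only
        rw [if_neg (by omega)]
        simp
        omega

lemma Mval_attained (α : ℝ) {k i : ℕ} (hk : 1 ≤ k) (hki : k ≤ i) (hiN : i ≤ N) :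
    Mval α x k i ∈ MSet α x k i :=
  (MSet_nonempty hsort α hk hki hiN).csInf_mem (MSet_finite α x k i)

end msets
section split

variable {N : ℕ} {x : ℕ → E2}
  (hsort : ∀ i j, 1 ≤ i → i < j → j ≤ N → x i 0 < x j 0 ∧ x j 1 < x i 1)

include hsort

lemma exists_split (α : ℝ) (hα : 0 < α) {k' i : ℕ} (hk' : 1 ≤ k') (hki : k' + 1 ≤ i)
    (hiN : i ≤ N) (P : Fin (k' + 1) → Finset E2) (hPne : ∀ m, (P m).Nonempty)
    (hPdisj : ∀ m m', m ≠ m' → Disjoint (P m) (P m'))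
    (hPun : Finset.univ.biUnion P = (Finset.Icc 1 i).image x) :
    ∃ j, k' ≤ j ∧ j ≤ i - 1 ∧
      Mval α x k' j + fCost α (C x (j + 1) i) ≤ ∑ m, fCost α (P m) := by
  classical
  -- choose medoids
  choose y hy1 hy2 using fun m => fCost_exists α (hPne m)
  -- medoid indices
  have hyT : ∀ m, y m ∈ (Finset.Icc 1 i).image x := fun m =>
    hPun ▸ (Finset.subset_biUnion_of_mem P (Finset.mem_univ m)) (hy1 m)
  choose c hc1 hc2 using fun m => Finset.mem_image.1 (hyT m)
  have hcinj : Function.Injective c := by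
    intro m m' h
    by_contra hne
    have hyy : y m = y m' := by rw [← hc2, ← hc2, h]
    exact Finset.disjoint_left.1 (hPdisj m m' hne) (hy1 m) (hyy ▸ hy1 m')
  -- sort the medoid indices
  set s : Finset ℕ := Finset.univ.image c with hs
  have hcard : s.card = k' + 1 := by
    rw [hs, Finset.card_image_of_injective _ hcinj, Finset.card_univ, Fintype.card_fin]
  set d : Fin (k' + 1) → ℕ := fun m => ((s.orderIsoOfFin hcard) m : ℕ) with hd
  have hdmono : StrictMono d := fun a b h => by
    exact_mod_cast (s.orderIsoOfFin hcard).strictMono h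
  have hdmemS : ∀ m, d m ∈ s := fun m => ((s.orderIsoOfFin hcard) m).2
  have hdmem : ∀ m, d m ∈ Finset.Icc 1 i := by
    intro m
    obtain ⟨m₀, -, hm₀⟩ := Finset.mem_image.1 (hdmemS m)
    exact hm₀ ▸ hc1 m₀
  have hdsurj : ∀ m, ∃ m', d m' = c m := by
    intro m
    obtain ⟨b, hb⟩ := (s.orderIsoOfFin hcard).surjective
      ⟨c m, by rw [hs]; exact Finset.mem_image_of_mem c (Finset.mem_univ m)⟩
    exact ⟨b, congrArg Subtype.val hb⟩
  set w : Fin (k' + 1) → E2 := fun m' => x (d m') with hw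
  set a : ℕ → Fin (k' + 1) := fun t => medoidAssign w (x t) with ha
  have hafix : ∀ m, a (d m) = m := fun m => assign_fixed hsort hiN hdmono hdmem m
  -- the last Voronoi cell
  set G : Finset ℕ := (Finset.Icc 1 i).filter (fun t => a t = Fin.last k') with hG
  have hGne : G.Nonempty :=
    ⟨d (Fin.last k'), Finset.mem_filter.2 ⟨hdmem _, hafix _⟩⟩
  set t0 : ℕ := G.min' hGne with ht0
  have ht0G : t0 ∈ G := G.min'_mem hGne
  have ht0Icc : t0 ∈ Finset.Icc 1 i := (Finset.mem_filter.1 ht0G).1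
  have ht0a : a t0 = Fin.last k' := (Finset.mem_filter.1 ht0G).2
  have hup : ∀ t ∈ Finset.Icc 1 i, t0 ≤ t → a t = Fin.last k' := by
    intro t ht htt
    have hmono : a t0 ≤ a t := assign_mono hsort hiN hdmono hdmem ht0Icc ht htt
    rw [ht0a] at hmono
    exact le_antisymm (Fin.le_last _) hmono
  have hlow : ∀ m : Fin (k' + 1), m ≠ Fin.last k' → d m < t0 := by
    intro m hm
    by_contra hcon
    push_neg at hcon
    exact hm ((hafix m) ▸ hup (d m) (hdmem m) hcon)
  -- a lower bound on d
  have hd_lb : ∀ m : Fin (k' + 1), m.val + 1 ≤ d m := by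
    intro m
    induction m using Fin.induction with
    | zero => exact (Finset.mem_Icc.1 (hdmem 0)).1
    | succ m ih =>
      have h1 := hdmono (show m.castSucc < m.succ from Fin.castSucc_lt_succ)
      have h2 : (m.castSucc).val = m.val := rfl
      have h3 : (m.succ).val = m.val + 1 := rfl
      omega
  set j : ℕ := t0 - 1 with hj
  have hm0 : d (⟨k' - 1, by omega⟩ : Fin (k' + 1)) < t0 := by
    apply hlow
    intro h
    have := congrArg Fin.val h
    simp [Fin.last] at this
    omega
  have hm0lb := hd_lb (⟨k' - 1, by omega⟩ : Fin (k' + 1))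
  have ht0i : t0 ≤ i := (Finset.mem_Icc.1 ht0Icc).2
  have hk'j : k' ≤ j := by simp only [hj]; simp at hm0lb; omega
  have hji : j ≤ i - 1 := by omega
  have hjt0 : j + 1 = t0 := by
    have := (Finset.mem_Icc.1 ht0Icc).1
    omega
  -- the index clusters below j
  set I : Fin k' → Finset ℕ :=
    fun m => (Finset.Icc 1 j).filter (fun t => a t = m.castSucc) with hI
  have hdlt : ∀ m : Fin k', d m.castSucc ∈ Finset.Icc 1 j := by
    intro m
    have h1 := hlow m.castSucc (ne_of_lt (Fin.castSucc_lt_last m))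
    have h2 := (Finset.mem_Icc.1 (hdmem m.castSucc)).1
    exact Finset.mem_Icc.2 ⟨h2, by omega⟩
  have hImem : ∀ m : Fin k', d m.castSucc ∈ I m := fun m =>
    Finset.mem_filter.2 ⟨hdlt m, hafix m.castSucc⟩
  have hIne : ∀ m, (I m).Nonempty := fun m => ⟨d m.castSucc, hImem m⟩
  have hIdisj : ∀ m m', m ≠ m' → Disjoint (I m) (I m') := by
    intro m m' hmm
    rw [Finset.disjoint_left]
    intro t ht ht'
    have h1 := (Finset.mem_filter.1 ht).2
    have h2 := (Finset.mem_filter.1 ht').2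
    exact hmm (Fin.castSucc_injective _ (h1 ▸ h2 ▸ rfl : m.castSucc = m'.castSucc))
  have hanotlast : ∀ t ∈ Finset.Icc 1 j, a t ≠ Fin.last k' := by
    intro t ht hcon
    have htG : t ∈ G := Finset.mem_filter.2
      ⟨Finset.mem_Icc.2 ⟨(Finset.mem_Icc.1 ht).1, by have := (Finset.mem_Icc.1 ht).2; omega⟩,
        hcon⟩
    have := G.min'_le t htG
    have := (Finset.mem_Icc.1 ht).2
    omega
  have hIun : Finset.univ.biUnion I = Finset.Icc 1 j := by
    ext t
    simp only [Finset.mem_biUnion, Finset.mem_univ, true_and, hI, Finset.mem_filter]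
    constructor
    · rintro ⟨m, hm, -⟩; exact hm
    · intro ht
      exact ⟨(a t).castPred (hanotlast t ht), ht, (Fin.castSucc_castPred _ _).symm⟩
  -- injectivity on intervals for sums over images
  have hinj : ∀ {lo hi : ℕ}, 1 ≤ lo → hi ≤ i →
      ∀ p ∈ Finset.Icc lo hi, ∀ q ∈ Finset.Icc lo hi, x p = x q → p = q := by
    intro lo hi hlo hhi p hp q hq hpq
    have hp' := Finset.mem_Icc.1 hp
    have hq' := Finset.mem_Icc.1 hq
    exact x_injOn hsort (le_trans hlo hp'.1) (le_trans hlo hq'.1)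
      (le_trans hp'.2 (le_trans hhi hiN)) (le_trans hq'.2 (le_trans hhi hiN)) hpq
  -- the global lower bound function
  set q : E2 → ℝ := fun z => dist z (x (d (medoidAssign w z))) ^ α with hq
  -- step B: each cluster's cost dominates the assigned cost
  have hB : ∀ m, ∑ z ∈ P m, q z ≤ fCost α (P m) := by
    intro m
    rw [hy2 m]
    apply Finset.sum_le_sum
    intro z hz
    obtain ⟨m'', hm''⟩ := hdsurj m
    have h1 : dist z (w (medoidAssign w z)) ≤ dist z (w m'') := medoidAssign_le w z m''
    have h2 : w m'' = y m := by rw [hw]; simp only; rw [hm'', hc2]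
    rw [h2] at h1
    exact Real.rpow_le_rpow dist_nonneg h1 hα.le
  -- step C/D: rewrite the total assigned cost as a sum over indices
  have hC : ∑ m, ∑ z ∈ P m, q z = ∑ t ∈ Finset.Icc 1 i, q (x t) := by
    rw [← Finset.sum_biUnion (fun m _ m' _ hne => hPdisj m m' hne), hPun,
      Finset.sum_image (hinj (le_refl 1) (le_refl i))]
  -- step E: split the index sum
  have hE : ∑ t ∈ Finset.Icc 1 i, q (x t) =
      ∑ t ∈ Finset.Icc 1 j, q (x t) + ∑ t ∈ Finset.Icc (j + 1) i, q (x t) := by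
    rw [← Finset.sum_union (by
      rw [Finset.disjoint_left]; intro t ht ht'
      have := Finset.mem_Icc.1 ht; have := Finset.mem_Icc.1 ht'; omega)]
    congr 1
    ext t
    simp only [Finset.mem_union, Finset.mem_Icc]
    omega
  -- step F: the tail sum dominates the cost of the last interval cluster
  have hdlastmem : d (Fin.last k') ∈ Finset.Icc (j + 1) i := by
    have h1 : d (Fin.last k') ∈ G := Finset.mem_filter.2 ⟨hdmem _, hafix _⟩
    have h2 := G.min'_le _ h1
    have h3 := (Finset.mem_Icc.1 (hdmem (Fin.last k'))).2
    exact Finset.mem_Icc.2 ⟨by omega, h3⟩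
  have hF : fCost α (C x (j + 1) i) ≤ ∑ t ∈ Finset.Icc (j + 1) i, q (x t) := by
    have heq : ∀ t ∈ Finset.Icc (j + 1) i, q (x t) = dist (x t) (x (d (Fin.last k'))) ^ α := by
      intro t ht
      have ht' := Finset.mem_Icc.1 ht
      have hlast : a t = Fin.last k' := hup t (Finset.mem_Icc.2 ⟨by omega, ht'.2⟩) (by omega)
      rw [hq]
      simp only
      rw [show medoidAssign w (x t) = a t from rfl, hlast]
    rw [Finset.sum_congr rfl heq]
    calc fCost α (C x (j + 1) i) ≤ ∑ z ∈ C x (j + 1) i, dist z (x (d (Fin.last k'))) ^ α := by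
          apply fCost_le
          exact Finset.mem_image_of_mem x hdlastmem
      _ = ∑ t ∈ Finset.Icc (j + 1) i, dist (x t) (x (d (Fin.last k'))) ^ α := by
          rw [show C x (j + 1) i = (Finset.Icc (j + 1) i).image x from rfl,
            Finset.sum_image (hinj (by omega) (le_refl i))]
  -- step G: the head sum dominates Mval k' j
  have hG2 : Mval α x k' j ≤ ∑ t ∈ Finset.Icc 1 j, q (x t) := by
    have hsum : ∑ t ∈ Finset.Icc 1 j, q (x t) = ∑ m : Fin k', ∑ t ∈ I m, q (x t) := by
      rw [← hIun, Finset.sum_biUnion (fun m _ m' _ hne => hIdisj m m' hne)]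
    rw [hsum]
    have hjN : j ≤ N := by omega
    calc Mval α x k' j ≤ ∑ m, fCost α ((I m).image x) :=
          mval_le_index hsort α hjN I hIne hIdisj hIun
      _ ≤ ∑ m : Fin k', ∑ t ∈ I m, q (x t) := by
          apply Finset.sum_le_sum
          intro m _
          have heq : ∀ t ∈ I m, q (x t) = dist (x t) (x (d m.castSucc)) ^ α := by
            intro t ht
            have h1 := (Finset.mem_filter.1 ht).2
            rw [hq]
            simp only
            rw [show medoidAssign w (x t) = a t from rfl, h1]
          rw [Finset.sum_congr rfl heq]
          have hIsub : I m ⊆ Finset.Icc 1 j := Finset.filter_subset _ _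
          calc fCost α ((I m).image x) ≤ ∑ z ∈ (I m).image x, dist z (x (d m.castSucc)) ^ α :=
                fCost_le α (Finset.mem_image_of_mem x (hImem m))
            _ = ∑ t ∈ I m, dist (x t) (x (d m.castSucc)) ^ α := by
                apply Finset.sum_image
                intro p hp q' hq' hpq
                exact hinj (le_refl 1) (show j ≤ i by omega) p (hIsub hp) q' (hIsub hq') hpq
  -- put everything together
  refine ⟨j, hk'j, hji, ?_⟩
  have htotal : ∑ m, ∑ z ∈ P m, q z ≤ ∑ m, fCost α (P m) :=
    Finset.sum_le_sum fun m _ => hB m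
  rw [hC, hE] at htotal
  linarith

end split
theorem bellman_equations (α : ℝ) (hα : 0 < α) (K N : ℕ) (x : ℕ → E2)
    (hsort : ∀ i j, 1 ≤ i → i < j → j ≤ N → x i 0 < x j 0 ∧ x j 1 < x i 1) :
    (∀ i, 1 ≤ i → i ≤ N → Mval α x 1 i = fCost α (C x 1 i)) ∧
    (∀ k i, 2 ≤ k → k ≤ K → k ≤ i → i ≤ N →
      Mval α x k i = sInf {v : ℝ | ∃ j, k - 1 ≤ j ∧ j ≤ i - 1 ∧
        v = Mval α x (k - 1) j + fCost α (C x (j + 1) i)}) := by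
  constructor
  · -- part (i)
    intro i h1 hiN
    rw [Mval_eq]
    have hset : MSet α x 1 i = {fCost α (C x 1 i)} := by
      ext v
      constructor
      · rintro ⟨P, hne, hdisj, hun, rfl⟩
        have hP0 : P 0 = (Finset.Icc 1 i).image x := by
          rw [← hun]
          ext z
          simp only [Finset.mem_biUnion, Finset.mem_univ, true_and]
          constructor
          · exact fun hz => ⟨0, hz⟩
          · rintro ⟨m, hm⟩
            rwa [Subsingleton.elim m 0] at hm
        simp only [Set.mem_singleton_iff, Fin.sum_univ_one, hP0]
        rfl
      · rintro rfl
        refine ⟨fun _ => C x 1 i, ?_, ?_, ?_, ?_⟩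
        · intro m
          exact ((Finset.nonempty_Icc).2 h1).image x
        · intro m m' h
          exact absurd (Subsingleton.elim m m') h
        · ext z
          simp only [Finset.mem_biUnion, Finset.mem_univ, true_and]
          exact ⟨fun ⟨m, hm⟩ => hm, fun hz => ⟨0, hz⟩⟩
        · rw [Fin.sum_univ_one]
    rw [hset, csInf_singleton]
  · -- part (ii)
    intro k i hk2 hkK hki hiN
    obtain ⟨k', rfl⟩ : ∃ k', k = k' + 1 := ⟨k - 1, by omega⟩
    have hk' : 1 ≤ k' := by omega
    have hkk : k' + 1 - 1 = k' := rfl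
    rw [hkk]
    set S : Set ℝ :=
      {v : ℝ | ∃ j, k' ≤ j ∧ j ≤ i - 1 ∧ v = Mval α x k' j + fCost α (C x (j + 1) i)} with hS
    have hSim : S = (fun j => Mval α x k' j + fCost α (C x (j + 1) i)) '' Set.Icc k' (i - 1) := by
      ext v
      simp only [hS, Set.mem_setOf_eq, Set.mem_image, Set.mem_Icc]
      constructor
      · rintro ⟨j, h1, h2, rfl⟩; exact ⟨j, ⟨h1, h2⟩, rfl⟩
      · rintro ⟨j, ⟨h1, h2⟩, rfl⟩; exact ⟨j, h1, h2, rfl⟩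
    have hSfin : S.Finite := hSim ▸ (Set.finite_Icc _ _).image _
    have hSne : S.Nonempty := ⟨_, ⟨k', le_refl _, by omega, rfl⟩⟩
    apply le_antisymm
    · -- Mval ≤ sInf S
      obtain ⟨j0, hj0mem, hj0eq⟩ := hSim ▸ hSne.csInf_mem hSfin
      rw [Set.mem_Icc] at hj0mem
      have hj0eq' : sInf S = Mval α x k' j0 + fCost α (C x (j0 + 1) i) := by
        rw [hSim, ← hj0eq]
      rw [hj0eq']
      have hj0N : j0 ≤ N := by omega
      obtain ⟨P, hPne, hPdisj, hPun, hPsum⟩ :=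
        Mval_attained hsort α hk' (by omega : k' ≤ j0) hj0N
      set Q : Fin (k' + 1) → Finset E2 := Fin.snoc P (C x (j0 + 1) i) with hQ
      have hQcast : ∀ m : Fin k', Q m.castSucc = P m := fun m => Fin.snoc_castSucc _ _ _
      have hQlast : Q (Fin.last k') = C x (j0 + 1) i := Fin.snoc_last _ _
      have hlastCne : (C x (j0 + 1) i).Nonempty :=
        ((Finset.nonempty_Icc).2 (by omega : j0 + 1 ≤ i)).image x
      have hPsubIm : ∀ m : Fin k', P m ⊆ (Finset.Icc 1 j0).image x := by
        intro m
        rw [← hPun]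
        exact Finset.subset_biUnion_of_mem P (Finset.mem_univ m)
      have hdisjC : Disjoint ((Finset.Icc 1 j0).image x) (C x (j0 + 1) i) := by
        apply image_disjoint hsort
        · exact Finset.Icc_subset_Icc_right (by omega)
        · exact Finset.Icc_subset_Icc (by omega) hiN
        · rw [Finset.disjoint_left]
          intro t ht ht'
          have := Finset.mem_Icc.1 ht; have := Finset.mem_Icc.1 ht'; omega
      apply csInf_le (MSet_bddBelow α x (k' + 1) i)
      refine ⟨Q, ?_, ?_, ?_, ?_⟩
      · intro m
        induction m using Fin.lastCases with
        | last => rw [hQlast]; exact hlastCne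
        | cast m => rw [hQcast]; exact hPne m
      · intro m m' hmm
        induction m using Fin.lastCases with
        | last =>
          induction m' using Fin.lastCases with
          | last => exact absurd rfl hmm
          | cast m' =>
            rw [hQlast, hQcast]
            exact Finset.disjoint_of_subset_right (hPsubIm m') hdisjC.symm
        | cast m =>
          induction m' using Fin.lastCases with
          | last =>
            rw [hQlast, hQcast]
            exact Finset.disjoint_of_subset_left (hPsubIm m) hdisjC
          | cast m' =>
            rw [hQcast, hQcast]
            exact hPdisj m m' (fun h => hmm (h ▸ rfl))
      · have hQun : Finset.univ.biUnion Q = (Finset.univ.biUnion P) ∪ C x (j0 + 1) i := by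
          ext z
          simp only [Finset.mem_biUnion, Finset.mem_univ, true_and, Finset.mem_union]
          constructor
          · rintro ⟨m, hm⟩
            induction m using Fin.lastCases with
            | last => right; rwa [hQlast] at hm
            | cast m => left; exact ⟨m, by rwa [hQcast] at hm⟩
          · rintro (⟨m, hm⟩ | hz)
            · exact ⟨m.castSucc, by rwa [hQcast]⟩
            · exact ⟨Fin.last k', by rwa [hQlast]⟩
        rw [hQun, hPun, show C x (j0 + 1) i = (Finset.Icc (j0 + 1) i).image x from rfl,
          ← Finset.image_union]
        congr 1
        ext t
        simp only [Finset.mem_union, Finset.mem_Icc]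
        omega
      · rw [Fin.sum_univ_castSucc]
        simp only [hQcast, hQlast]
        rw [← hPsum]
    · -- sInf S ≤ Mval
      apply le_csInf (MSet_nonempty hsort α (by omega) hki hiN)
      rintro v ⟨P, hPne, hPdisj, hPun, rfl⟩
      obtain ⟨j, hj1, hj2, hle⟩ := exists_split hsort α hα hk' hki hiN P hPne hPdisj hPun
      exact le_trans (csInf_le hSfin.bddBelow ⟨j, hj1, hj2, rfl⟩) hle
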